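/- If an action of a group G on a uniform space (X,𝒰) is weakly mixing and non-sensitive, then X has at most one point. -/

import Mathlib

open scoped Uniformity

/-- A weakly mixing non-sensitive action on a Hausdorff uniform space forces
the space to have at most one point. -/
theorem weaklyMixing_nonSensitive_is_trivial {G X : Type*} [Group G]
    [UniformSpace X] [T2Space X] [MulAction G X]
    (hunif : ∀ g : G, UniformContinuous fun x : X => g • x)
    (hwm : ∀ O₁ O₂ : Set (X × X), IsOpen O₁ → IsOpen O₂ →
      O₁.Nonempty → O₂.Nonempty →
      ∃ g : G, ((fun p : X × X => (g • p.1, g • p.2)) '' O₁ ∩ O₂).Nonempty)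
    (hns : ∀ ε ∈ 𝓤 X, ∃ O : Set X, IsOpen O ∧ O.Nonempty ∧
      ∀ (g : G) (x y : X), x ∈ O → y ∈ O → (g • x, g • y) ∈ ε) :
    Subsingleton X := by
  constructor
  intro x y
  by_contra hxy
  obtain ⟨ε, hε, hxyε⟩ : ∃ ε ∈ 𝓤 X, (x, y) ∉ ε := by
    by_contra h
    push_neg at h
    exact hxy (eq_of_uniformity fun {V} hV => h V hV)
  obtain ⟨δ, hδ, hδsymm, hδcomp⟩ := comp_comp_symm_mem_uniformity_sets hε
  obtain ⟨O, hOopen, hOne, hOsmall⟩ := hns δ hδ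
  set U : Set X := interior (UniformSpace.ball x δ) with hU
  set V : Set X := interior (UniformSpace.ball y δ) with hV
  have hxU : x ∈ U := mem_interior_iff_mem_nhds.2 (UniformSpace.ball_mem_nhds x hδ)
  have hyV : y ∈ V := mem_interior_iff_mem_nhds.2 (UniformSpace.ball_mem_nhds y hδ)
  obtain ⟨g, p, ⟨⟨a, b⟩, hab, hpeq⟩, hpUV⟩ :=
    hwm (O ×ˢ O) (U ×ˢ V) (hOopen.prod hOopen) (isOpen_interior.prod isOpen_interior)
      (hOne.prod hOne) ⟨(x, y), hxU, hyV⟩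
  subst hpeq
  have hmem : (g • a, g • b) ∈ δ := hOsmall g a b hab.1 hab.2
  have hU' : g • a ∈ UniformSpace.ball x δ := interior_subset hpUV.1
  have hV' : g • b ∈ UniformSpace.ball y δ := interior_subset hpUV.2
  refine hxyε (hδcomp ?_)
  exact ⟨g • b, ⟨g • a, hU', hmem⟩, hδsymm.symm _ _ hV'⟩
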